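/- Define W(t₁,t₂) = 2Δξ + (Δx)²/Δξ + cos(t₂)√(1+sin²t₂)/sin(t₂) − cos(t₁)√(1+sin²t₁)/sin(t₁), where Δx = sin t₂ − sin t₁ and Δξ = ξ(t₂) − ξ(t₁) with ξ(t) = ∫₀ᵗ sin²/√(1+sin²). For t₁ < t₂ with sin t₁ · sin t₂ ≠ 0 and Δξ > 0, the partial derivative ∂W/∂t₁ equals (√(1+sin²t₁)/(Δξ)²)·[cos(t₁)Δξ/sin(t₁) − sin(t₁)Δx/√(1+sin²t₁)]², and in particular ∂W/∂t₁ ≥ 0. -/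

import Mathlib

open Real

noncomputable def xi (t : ℝ) : ℝ :=
  ∫ τ in (0:ℝ)..t, Real.sin τ ^ 2 / Real.sqrt (1 + Real.sin τ ^ 2)

noncomputable def W (t₁ t₂ : ℝ) : ℝ :=
  2 * (xi t₂ - xi t₁) + (Real.sin t₂ - Real.sin t₁) ^ 2 / (xi t₂ - xi t₁)
    + Real.cos t₂ * Real.sqrt (1 + Real.sin t₂ ^ 2) / Real.sin t₂
    - Real.cos t₁ * Real.sqrt (1 + Real.sin t₁ ^ 2) / Real.sin t₁

lemma cont_f : Continuous (fun τ : ℝ => Real.sin τ ^ 2 / Real.sqrt (1 + Real.sin τ ^ 2)) := by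
  apply Continuous.div
  · exact (Real.continuous_sin.pow 2)
  · exact (continuous_const.add (Real.continuous_sin.pow 2)).sqrt
  · intro τ
    positivity

lemma hasDerivAt_xi (t : ℝ) :
    HasDerivAt xi (Real.sin t ^ 2 / Real.sqrt (1 + Real.sin t ^ 2)) t := by
  unfold xi
  exact intervalIntegral.integral_hasDerivAt_right (cont_f.intervalIntegrable _ _)
    (cont_f.stronglyMeasurableAtFilter _ _) cont_f.continuousAt

theorem W_partial_t1 (t₁ t₂ : ℝ) (h : t₁ < t₂)
    (hs : Real.sin t₁ * Real.sin t₂ ≠ 0) (hΔ : 0 < xi t₂ - xi t₁) :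
    deriv (fun s => W s t₂) t₁ =
      (Real.sqrt (1 + Real.sin t₁ ^ 2) / (xi t₂ - xi t₁) ^ 2) *
        (Real.cos t₁ * (xi t₂ - xi t₁) / Real.sin t₁
          - Real.sin t₁ * (Real.sin t₂ - Real.sin t₁) / Real.sqrt (1 + Real.sin t₁ ^ 2)) ^ 2
    ∧ 0 ≤ deriv (fun s => W s t₂) t₁ := by
  have hs1 : Real.sin t₁ ≠ 0 := fun h0 => hs (by rw [h0]; ring)
  have hΔ' : xi t₂ - xi t₁ ≠ 0 := ne_of_gt hΔ
  have hqpos : (0:ℝ) < 1 + Real.sin t₁ ^ 2 := by positivity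
  set g : ℝ := Real.sqrt (1 + Real.sin t₁ ^ 2) with hgdef
  have hg : 0 < g := Real.sqrt_pos.mpr hqpos
  have hg2 : g ^ 2 = 1 + Real.sin t₁ ^ 2 := Real.sq_sqrt hqpos.le
  have hcos : Real.cos t₁ ^ 2 = 1 - Real.sin t₁ ^ 2 := by
    have := Real.sin_sq_add_cos_sq t₁; linarith
  -- pieces
  have hA : HasDerivAt (fun s => xi t₂ - xi s)
      (-(Real.sin t₁ ^ 2 / g)) t₁ := ((hasDerivAt_xi t₁).const_sub (xi t₂))
  have hB : HasDerivAt (fun s => (Real.sin t₂ - Real.sin s) ^ 2)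
      (2 * (Real.sin t₂ - Real.sin t₁) ^ 1 * (-Real.cos t₁)) t₁ :=
    ((Real.hasDerivAt_sin t₁).const_sub (Real.sin t₂)).pow 2
  have hBA : HasDerivAt (fun s => (Real.sin t₂ - Real.sin s) ^ 2 / (xi t₂ - xi s))
      ((2 * (Real.sin t₂ - Real.sin t₁) ^ 1 * (-Real.cos t₁) * (xi t₂ - xi t₁)
        - (Real.sin t₂ - Real.sin t₁) ^ 2 * (-(Real.sin t₁ ^ 2 / g))) / (xi t₂ - xi t₁) ^ 2) t₁ :=
    hB.div hA hΔ'
  have hu : HasDerivAt (fun s => 1 + Real.sin s ^ 2)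
      (2 * Real.sin t₁ ^ 1 * Real.cos t₁) t₁ :=
    (((Real.hasDerivAt_sin t₁).pow 2).const_add 1)
  have hsq : HasDerivAt (fun s => Real.sqrt (1 + Real.sin s ^ 2))
      (2 * Real.sin t₁ ^ 1 * Real.cos t₁ / (2 * g)) t₁ := hu.sqrt (ne_of_gt hqpos)
  have hnum : HasDerivAt (fun s => Real.cos s * Real.sqrt (1 + Real.sin s ^ 2))
      (-Real.sin t₁ * g + Real.cos t₁ * (2 * Real.sin t₁ ^ 1 * Real.cos t₁ / (2 * g))) t₁ :=
    (Real.hasDerivAt_cos t₁).mul hsq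
  have hlast : HasDerivAt (fun s => Real.cos s * Real.sqrt (1 + Real.sin s ^ 2) / Real.sin s)
      (((-Real.sin t₁ * g + Real.cos t₁ * (2 * Real.sin t₁ ^ 1 * Real.cos t₁ / (2 * g)))
        * Real.sin t₁ - Real.cos t₁ * g * Real.cos t₁) / Real.sin t₁ ^ 2) t₁ :=
    hnum.div (Real.hasDerivAt_sin t₁) hs1
  have hW : HasDerivAt (fun s => W s t₂)
      (2 * (-(Real.sin t₁ ^ 2 / g))
        + (2 * (Real.sin t₂ - Real.sin t₁) ^ 1 * (-Real.cos t₁) * (xi t₂ - xi t₁)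
          - (Real.sin t₂ - Real.sin t₁) ^ 2 * (-(Real.sin t₁ ^ 2 / g))) / (xi t₂ - xi t₁) ^ 2
        + (Real.cos t₂ * Real.sqrt (1 + Real.sin t₂ ^ 2) / Real.sin t₂) * 0
        - ((-Real.sin t₁ * g + Real.cos t₁ * (2 * Real.sin t₁ ^ 1 * Real.cos t₁ / (2 * g)))
            * Real.sin t₁ - Real.cos t₁ * g * Real.cos t₁) / Real.sin t₁ ^ 2) t₁ := by
    have := (((hA.const_mul 2).add hBA).add
      ((hasDerivAt_const t₁ (Real.cos t₂ * Real.sqrt (1 + Real.sin t₂ ^ 2) / Real.sin t₂)))).sub hlast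
    simp only [W]
    refine this.congr_deriv ?_
    ring
  have hderiv := hW.deriv
  have key : deriv (fun s => W s t₂) t₁ =
      (g / (xi t₂ - xi t₁) ^ 2) *
        (Real.cos t₁ * (xi t₂ - xi t₁) / Real.sin t₁
          - Real.sin t₁ * (Real.sin t₂ - Real.sin t₁) / g) ^ 2 := by
    rw [hderiv]
    have hgne : g ≠ 0 := ne_of_gt hg
    set x := Real.sin t₁ with hx
    set c := Real.cos t₁ with hc
    set D := xi t₂ - xi t₁ with hD
    set d := Real.sin t₂ - x with hd
    have hd2 : Real.sin t₂ = d + x := by rw [hd]; ring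
    rw [hd2]
    field_simp
    linear_combination (D^2*x^2) * hg2 - (D^2*x^2) * hcos
  refine ⟨key, ?_⟩
  rw [key]
  positivity
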